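/- On the elliptic curve E over ℚ given by v² = u³ - (s⁴/48 - sp/2)u + (s⁶/864 - s³p/24 + p²/4) with s = a+b+c, p = abc ≠ 0 and s³ ≠ 27p, the point Q = (s²/12, p/2) has order exactly 3. -/

import Mathlib

open WeierstrassCurve.Affine WeierstrassCurve.Affine.Point in
theorem stmt_12 (a b c : ℚ) (s p : ℚ)
    (hs : s = a + b + c) (hp : p = a * b * c) (hp0 : p ≠ 0)
    (hns : s ^ 3 ≠ 27 * p)
    (W : WeierstrassCurve.Affine ℚ)
    (hW : W = { a₁ := 0, a₂ := 0, a₃ := 0,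
                a₄ := -(s ^ 4 / 48 - s * p / 2),
                a₆ := s ^ 6 / 864 - s ^ 3 * p / 24 + p ^ 2 / 4 })
    (hQ : W.Nonsingular (s ^ 2 / 12) (p / 2)) :
    addOrderOf (WeierstrassCurve.Affine.Point.some _ _ hQ) = 3 := by
  have hfact : Fact (Nat.Prime 3) := ⟨by norm_num⟩
  set x : ℚ := s ^ 2 / 12 with hx
  set y : ℚ := p / 2 with hyy
  have hy : y ≠ W.negY x y := by
    simp only [hW, negY, hyy]
    intro h
    apply hp0
    linarith
  have hL : W.slope x x y y = s / 2 := by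
    rw [slope_of_Y_ne rfl hy]
    simp only [hW, negY, hx, hyy]
    field_simp
    ring
  have hx2 : W.addX x x (W.slope x x y y) = x := by
    rw [hL]
    simp only [hW, addX, hx]
    ring
  have hy2 : W.negY (W.addX x x (W.slope x x y y)) (W.addY x x y (W.slope x x y y)) = y := by
    rw [addY, negY_negY, negAddY, hx2]
    ring
  have h2 : Point.some _ _ hQ + Point.some _ _ hQ =
      Point.some _ _ (nonsingular_add hQ hQ fun hxy => hy hxy.right) := add_of_Y_ne hy
  have hy3 := congrArg (W.negY (W.addX x x (W.slope x x y y))) hy2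
  rw [negY_negY, hx2] at hy3
  have h3 : (3 : ℕ) • Point.some _ _ hQ = 0 := by
    rw [succ_nsmul, succ_nsmul, one_nsmul, h2, add_of_Y_eq hx2 hy3]
  have hne : Point.some _ _ hQ ≠ 0 := by
    intro h
    cases h
  exact addOrderOf_eq_prime h3 hne
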